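/- arXiv:2103.05382 — 2 statements merged into one kernel-verified Lean document; each statement's English description precedes it below -/
import Mathlib

section
/- For integers p ≥ 1 and n ≥ 0, the integral K(p,n) = ∫₀¹ (z(1-z))^((2p-1)/2) (z - 1/2)^(2n) dz satisfies the recurrence K(p,n) = ((2p-1)/(2n+1)) · K(p-1, n+1). -/
open MeasureTheory Real

/-- `K(p,n) = ∫₀¹ (z(1-z))^((2p-1)/2) (z - 1/2)^(2n) dz`. -/
noncomputable def Kint (p n : ℕ) : ℝ :=
  ∫ z in (0:ℝ)..1, (z * (1 - z)) ^ ((2 * (p : ℝ) - 1) / 2) * (z - 1/2) ^ (2 * n)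

lemma Kint_eq_trig (p n : ℕ) :
    Kint p n = (1 / 4 ^ (p + n)) * ∫ φ in (0:ℝ)..π, sin φ ^ (2 * p) * cos φ ^ (2 * n) := by
  set g : ℝ → ℝ := fun z => (z * (1 - z)) ^ ((2 * (p : ℝ) - 1) / 2) * (z - 1/2) ^ (2 * n) with hg
  have h1 : Kint p n = ∫ z in Set.Ioo (0:ℝ) 1, g z := by
    rw [Kint, intervalIntegral.integral_of_le zero_le_one, integral_Ioc_eq_integral_Ioo]
  have himg : Set.Ioo (0:ℝ) 1 = (fun φ => (1 - cos φ) / 2) '' Set.Ioo 0 π := by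
    ext z
    constructor
    · rintro ⟨hz0, hz1⟩
      refine ⟨arccos (1 - 2 * z), ⟨?_, ?_⟩, ?_⟩
      · exact arccos_pos.2 (by linarith)
      · exact lt_of_le_of_ne (arccos_le_pi _) (fun h => by
          have := arccos_eq_pi.1 h; linarith)
      · show (1 - cos (arccos (1 - 2 * z))) / 2 = z
        rw [cos_arccos (by linarith) (by linarith)]; ring
    · rintro ⟨φ, ⟨hφ0, hφπ⟩, rfl⟩
      have h1' : cos φ < 1 := by
        have := strictAntiOn_cos (Set.mem_Icc.2 ⟨le_refl 0, pi_pos.le⟩)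
          (Set.mem_Icc.2 ⟨hφ0.le, hφπ.le⟩) hφ0
        simpa using this
      have h2' : -1 < cos φ := by
        have := strictAntiOn_cos (Set.mem_Icc.2 ⟨hφ0.le, hφπ.le⟩)
          (Set.mem_Icc.2 ⟨pi_pos.le, le_refl _⟩) hφπ
        simpa using this
      constructor
      · dsimp; linarith
      · dsimp; linarith
  have hderiv : ∀ x ∈ Set.Ioo (0:ℝ) π,
      HasDerivWithinAt (fun φ => (1 - cos φ) / 2) (sin x / 2) (Set.Ioo 0 π) x := by
    intro x _
    have : HasDerivAt (fun φ => (1 - cos φ) / 2) (sin x / 2) x := by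
      have := ((Real.hasDerivAt_cos x).const_sub 1).div_const 2
      simpa using this
    exact this.hasDerivWithinAt
  have hinj : Set.InjOn (fun φ => (1 - cos φ) / 2) (Set.Ioo 0 π) := by
    intro a ha b hb hab
    have : cos a = cos b := by dsimp at hab; linarith
    exact injOn_cos (Set.mem_Icc.2 ⟨ha.1.le, ha.2.le⟩) (Set.mem_Icc.2 ⟨hb.1.le, hb.2.le⟩) this
  rw [h1, himg, MeasureTheory.integral_image_eq_integral_abs_deriv_smul
    measurableSet_Ioo hderiv hinj g]
  have hpt : ∀ x ∈ Set.Ioo (0:ℝ) π,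
      |sin x / 2| • g ((1 - cos x) / 2)
        = (1 / 4 ^ (p + n)) * (sin x ^ (2 * p) * cos x ^ (2 * n)) := by
    intro x hx
    have hs : 0 < sin x := sin_pos_of_pos_of_lt_pi hx.1 hx.2
    have ht : (0:ℝ) < sin x / 2 := by linarith
    have hz : (1 - cos x) / 2 * (1 - (1 - cos x) / 2) = (sin x / 2) ^ 2 := by
      have := sin_sq_add_cos_sq x
      nlinarith [this]
    have hzz : ((1 - cos x) / 2 - 1 / 2) ^ (2 * n) = (cos x / 2) ^ (2 * n) := by
      have : (1 - cos x) / 2 - 1 / 2 = -(cos x / 2) := by ring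
      rw [this, Even.neg_pow (even_two_mul n)]
    have hr : ((sin x / 2) ^ 2 : ℝ) ^ ((2 * (p : ℝ) - 1) / 2) * (sin x / 2)
        = (sin x / 2) ^ (2 * p) := by
      have hsq : ((sin x / 2) ^ 2 : ℝ) ^ ((2 * (p : ℝ) - 1) / 2)
          = (sin x / 2) ^ (2 * (p:ℝ) - 1) := by
        rw [← Real.rpow_natCast (sin x / 2) 2, ← Real.rpow_mul ht.le]
        congr 1
        push_cast
        ring
      rw [hsq, ← Real.rpow_natCast (sin x / 2) (2 * p),
        show ((2 * p : ℕ) : ℝ) = (2 * (p:ℝ) - 1) + 1 by push_cast; ring,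
        Real.rpow_add ht, Real.rpow_one]
    have habs : |sin x / 2| = sin x / 2 := abs_of_pos ht
    rw [hg]
    dsimp only
    rw [hz, hzz, habs, smul_eq_mul]
    rw [show (sin x / 2) * ((((sin x / 2) ^ 2 : ℝ)) ^ ((2 * (p : ℝ) - 1) / 2) * (cos x / 2) ^ (2 * n))
        = (((sin x / 2) ^ 2 : ℝ) ^ ((2 * (p : ℝ) - 1) / 2) * (sin x / 2)) * (cos x / 2) ^ (2 * n) by ring]
    rw [hr]
    have hsplit : ((sin x / 2) ^ (2 * p) : ℝ) * (cos x / 2) ^ (2 * n)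
        = (sin x ^ (2 * p) * cos x ^ (2 * n)) / (2 ^ (2 * p) * 2 ^ (2 * n)) := by
      rw [div_pow, div_pow]; ring
    have h24 : ((2:ℝ) ^ (2 * p) * 2 ^ (2 * n)) = 4 ^ (p + n) := by
      rw [pow_add, pow_mul, pow_mul]; norm_num
    rw [hsplit, h24, one_div, div_eq_mul_inv, mul_comm]
  rw [MeasureTheory.setIntegral_congr_fun measurableSet_Ioo hpt]
  rw [MeasureTheory.integral_const_mul]
  rw [intervalIntegral.integral_of_le pi_pos.le, integral_Ioc_eq_integral_Ioo]

lemma trig_ibp (m n : ℕ) :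
    ∫ φ in (0:ℝ)..π, sin φ ^ (2 * m + 2) * cos φ ^ (2 * n)
      = ((2 * (m:ℝ) + 1) / (2 * (n:ℝ) + 1))
        * ∫ φ in (0:ℝ)..π, sin φ ^ (2 * m) * cos φ ^ (2 * n + 2) := by
  have hn1 : (2 * (n:ℝ) + 1) ≠ 0 := by positivity
  set u : ℝ → ℝ := fun x => sin x ^ (2 * m + 1) with hu
  set u' : ℝ → ℝ := fun x => (2 * m + 1 : ℝ) * sin x ^ (2 * m) * cos x with hu'
  set v : ℝ → ℝ := fun x => -(cos x ^ (2 * n + 1)) / (2 * (n:ℝ) + 1) with hv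
  set v' : ℝ → ℝ := fun x => sin x * cos x ^ (2 * n) with hv'
  have hud : ∀ x ∈ Set.uIcc (0:ℝ) π, HasDerivAt u (u' x) x := by
    intro x _
    have := (Real.hasDerivAt_sin x).pow (2 * m + 1)
    exact this.congr_deriv (by simp only [hu', Nat.add_sub_cancel]; push_cast; ring)
  have hvd : ∀ x ∈ Set.uIcc (0:ℝ) π, HasDerivAt v (v' x) x := by
    intro x _
    have h := (((Real.hasDerivAt_cos x).pow (2 * n + 1)).neg).div_const (2 * (n:ℝ) + 1)
    have he : -(↑(2 * n + 1) * cos x ^ (2 * n + 1 - 1) * -sin x) / (2 * (n:ℝ) + 1)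
        = v' x := by
      simp only [hv', Nat.add_sub_cancel]
      push_cast
      field_simp
    rw [he] at h
    exact h
  have hui : IntervalIntegrable u' volume 0 π :=
    (Continuous.intervalIntegrable (by continuity) 0 π)
  have hvi : IntervalIntegrable v' volume 0 π :=
    (Continuous.intervalIntegrable (by continuity) 0 π)
  have key := intervalIntegral.integral_mul_deriv_eq_deriv_mul hud hvd hui hvi
  have h1 : ∫ x in (0:ℝ)..π, u x * v' x
      = ∫ φ in (0:ℝ)..π, sin φ ^ (2 * m + 2) * cos φ ^ (2 * n) := by
    apply intervalIntegral.integral_congr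
    intro x _
    simp only [hu, hv']
    ring
  have h2 : ∫ x in (0:ℝ)..π, u' x * v x
      = -((2 * (m:ℝ) + 1) / (2 * (n:ℝ) + 1))
        * ∫ φ in (0:ℝ)..π, sin φ ^ (2 * m) * cos φ ^ (2 * n + 2) := by
    rw [← intervalIntegral.integral_const_mul]
    apply intervalIntegral.integral_congr
    intro x _
    simp only [hu', hv]
    field_simp
    ring
  have h0 : u π * v π - u 0 * v 0 = 0 := by
    simp [hu, hv, Real.sin_pi, Real.sin_zero]
  rw [h1, h2, h0] at key
  rw [key]; ring

/-- For integers `p ≥ 1` and `n ≥ 0`, `K(p,n) = ((2p-1)/(2n+1)) · K(p-1, n+1)`. -/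
theorem Kint_recurrence (p n : ℕ) (hp : 1 ≤ p) :
    Kint p n = ((2 * (p : ℝ) - 1) / (2 * (n : ℝ) + 1)) * Kint (p - 1) (n + 1) := by
  obtain ⟨m, rfl⟩ : ∃ m, p = m + 1 := ⟨p - 1, (Nat.succ_pred_eq_of_pos hp).symm⟩
  have hm : m + 1 - 1 = m := rfl
  rw [hm, Kint_eq_trig (m + 1) n, Kint_eq_trig m (n + 1)]
  simp only [show 2 * (m + 1) = 2 * m + 2 from by ring, show 2 * (n + 1) = 2 * n + 2 from by ring,
    show m + (n + 1) = m + 1 + n from by ring]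
  rw [trig_ibp m n]
  rw [show (2 * ((m + 1 : ℕ) : ℝ) - 1) = 2 * (m:ℝ) + 1 from by push_cast; ring]
  ring
end

section
/- Let F₀, F₁, ..., F_ℓ : L → ℝ be ℓ+1 linearly independent analytic functions on an open real interval L, and suppose one of them, F_k, has constant sign on L (never vanishes). Then there exist real constants d₀, ..., d_ℓ such that the linear combination Σ_{j=0}^ℓ d_j F_j has at least ℓ simple zeros in L. -/
open Set
open Submodule Module


lemma span_eval_top (n : ℕ) (s : Set ℝ) (F : Fin n → ℝ → ℝ)
    (hli : ∀ c : Fin n → ℝ, (∀ x ∈ s, ∑ j, c j * F j x = 0) → ∀ j, c j = 0) :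
    span ℝ ((fun t => fun j => F j t) '' s) = ⊤ := by
  by_contra hne
  obtain ⟨φ, hφ0, hφ⟩ := Submodule.exists_dual_map_eq_bot_of_lt_top
    (lt_top_iff_ne_top.2 hne) inferInstance
  set c : Fin n → ℝ := fun j => φ (fun j1 => if j = j1 then 1 else 0) with hc
  have hphi : ∀ w : Fin n → ℝ, φ w = ∑ j, w j * c j := by
    intro w
    conv_lhs => rw [pi_eq_sum_univ w]
    rw [map_sum]
    exact Finset.sum_congr rfl (fun j _ => by rw [map_smul, smul_eq_mul])
  have hzero : ∀ x ∈ s, ∑ j, c j * F j x = 0 := by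
    intro x hx
    have hmem : (fun j => F j x) ∈ span ℝ ((fun t => fun j => F j t) '' s) :=
      subset_span ⟨x, hx, rfl⟩
    have : φ (fun j => F j x) = 0 := by
      have := hφ ▸ Submodule.mem_map_of_mem (f := φ) hmem
      simpa using this
    rw [hphi] at this
    rw [← this]
    exact Finset.sum_congr rfl (fun j _ => mul_comm _ _)
  have hc0 := hli c hzero
  apply hφ0
  refine LinearMap.ext fun w => ?_
  rw [hphi w]
  simp [hc0]

lemma exists_eval_points (n : ℕ) (s : Set ℝ) (F : Fin n → ℝ → ℝ)
    (hli : ∀ c : Fin n → ℝ, (∀ x ∈ s, ∑ j, c j * F j x = 0) → ∀ j, c j = 0) :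
    ∃ x : Fin n → ℝ, (∀ i, x i ∈ s) ∧ StrictMono x ∧
      LinearIndependent ℝ (fun i => (fun j => F j (x i)) : Fin n → (Fin n → ℝ)) := by
  set v : ℝ → (Fin n → ℝ) := fun t => fun j => F j t with hv
  have hspan := span_eval_top n s F hli
  obtain ⟨b, hbs, hbspan, hbli⟩ := exists_linearIndependent ℝ (v '' s)
  rw [hspan] at hbspan
  have hbfin : b.Finite := hbli.setFinite
  have := hbfin.fintype
  have hbcard : b.toFinset.card = n := by
    have h2 := finrank_span_set_eq_card hbli
    rw [hbspan] at h2
    simp only [finrank_top, Module.finrank_fin_fun] at h2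
    exact h2.symm
  -- choose preimage points
  have hchoice : ∀ w ∈ b, ∃ t, t ∈ s ∧ v t = w := by
    intro w hw
    obtain ⟨t, ht, rfl⟩ := hbs hw
    exact ⟨t, ht, rfl⟩
  classical
  choose g hg1 hg2 using hchoice
  set g' : b → ℝ := fun w => g w.1 w.2 with hg'def
  have hg'inj : Function.Injective g' := by
    intro w w' h
    refine Subtype.ext ?_
    rw [← hg2 w.1 w.2, ← hg2 w'.1 w'.2]
    simp only [hg'def] at h
    rw [h]
  set P : Finset ℝ := Finset.univ.image g' with hP
  have hPcard : P.card = n := by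
    rw [hP, Finset.card_image_of_injective _ hg'inj, Finset.card_univ,
      ← Set.toFinset_card, hbcard]
  set x : Fin n → ℝ := fun i => (P.orderIsoOfFin hPcard i : ℝ) with hx
  have hxmono : StrictMono x := by
    intro i j hij
    exact Subtype.coe_lt_coe.2 ((P.orderIsoOfFin hPcard).lt_iff_lt.2 hij)
  have hex : ∀ i, ∃ w : b, g' w = x i := by
    intro i
    have : x i ∈ P := (P.orderIsoOfFin hPcard i).2
    rw [hP, Finset.mem_image] at this
    obtain ⟨w, _, hw⟩ := this
    exact ⟨w, hw⟩
  choose u' hu' using hex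
  have hu'inj : Function.Injective u' := by
    intro i j h
    apply hxmono.injective
    rw [← hu' i, ← hu' j, h]
  have hvx : (fun i => (fun j => F j (x i))) = fun i => ((u' i : b) : Fin n → ℝ) := by
    funext i
    have h1 : v (g' (u' i)) = (u' i : Fin n → ℝ) := hg2 _ _
    rw [hu' i] at h1
    exact h1
  exact ⟨x, fun i => by rw [← hu' i]; exact hg1 _ _, hxmono, hvx ▸ hbli.comp u' hu'inj⟩

private def dotF {n : ℕ} (d : Fin n → ℝ) : (Fin n → ℝ) →ₗ[ℝ] ℝ where
  toFun w := ∑ j, d j * w j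
  map_add' w w' := by simp [mul_add, Finset.sum_add_distrib]
  map_smul' c w := by
    simp only [Pi.smul_apply, smul_eq_mul, RingHom.id_apply, Finset.mul_sum]
    exact Finset.sum_congr rfl fun j _ => by ring

lemma exists_solve (n : ℕ) (u : Fin n → (Fin n → ℝ))
    (hu : LinearIndependent ℝ u) (r : Fin n → ℝ) :
    ∃ d : Fin n → ℝ, ∀ i, ∑ j, d j * u i j = r i := by
  classical
  set Φ : (Fin n → ℝ) →ₗ[ℝ] (Fin n → ℝ) :=
    { toFun := fun d => fun i => ∑ j, d j * u i j
      map_add' := fun d d' => by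
        funext i; simp [add_mul, Finset.sum_add_distrib]
      map_smul' := fun c d => by
        funext i; simp [smul_eq_mul, Finset.mul_sum, mul_assoc] } with hΦ
  have htop : span ℝ (Set.range u) = ⊤ :=
    hu.span_eq_top_of_card_eq_finrank' (by simp [Module.finrank_fin_fun])
  have hinj : Function.Injective Φ := by
    rw [← LinearMap.ker_eq_bot, LinearMap.ker_eq_bot']
    intro d hd
    have hψ : ∀ w : Fin n → ℝ, dotF d w = 0 := by
      intro w
      have hw : w ∈ span ℝ (Set.range u) := by rw [htop]; trivial
      induction hw using Submodule.span_induction with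
      | mem w hw =>
        obtain ⟨i, rfl⟩ := hw
        have := congr_fun hd i
        simpa [hΦ, dotF] using this
      | zero => simp
      | add w w' _ _ hw hw' => rw [map_add, hw, hw', add_zero]
      | smul c w _ hw => rw [map_smul, hw, smul_zero]
    have hdd := hψ d
    simp only [dotF, LinearMap.coe_mk, AddHom.coe_mk] at hdd
    funext j
    have := (Finset.sum_eq_zero_iff_of_nonneg
      (fun j _ => mul_self_nonneg (d j))).1 hdd j (Finset.mem_univ j)
    exact mul_self_eq_zero.1 this
  obtain ⟨d, hd⟩ := (LinearMap.injective_iff_surjective).1 hinj r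
  exact ⟨d, fun i => congr_fun hd i⟩

lemma ivt_zero {f : ℝ → ℝ} {p q : ℝ} (hpq : p < q) (hc : ContinuousOn f (Icc p q))
    (h : f p * f q < 0) : ∃ z ∈ Ioo p q, f z = 0 := by
  rcases lt_or_ge (f p) 0 with hp | hp
  · have hq : 0 < f q := by nlinarith
    obtain ⟨z, hz, hz0⟩ := intermediate_value_Ioo hpq.le hc (⟨hp, hq⟩ : (0:ℝ) ∈ Ioo (f p) (f q))
    exact ⟨z, hz, hz0⟩
  · have hp' : 0 < f p := lt_of_le_of_ne hp (by rintro h0; rw [← h0] at h; simp at h)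
    have hq : f q < 0 := by nlinarith
    obtain ⟨z, hz, hz0⟩ := intermediate_value_Ioo' hpq.le hc (⟨hq, hp'⟩ : (0:ℝ) ∈ Ioo (f q) (f p))
    exact ⟨z, hz, hz0⟩

lemma same_sign {a b : ℝ} {g : ℝ → ℝ} (hcont : ContinuousOn g (Ioo a b))
    (hg : ∀ x ∈ Ioo a b, g x ≠ 0) {p q : ℝ} (hp : p ∈ Ioo a b) (hq : q ∈ Ioo a b) :
    0 < g p * g q := by
  have hIcc : ∀ {u v : ℝ}, u ∈ Ioo a b → v ∈ Ioo a b → Icc u v ⊆ Ioo a b := by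
    intro u v hu hv t ht
    exact ⟨lt_of_lt_of_le hu.1 ht.1, lt_of_le_of_lt ht.2 hv.2⟩
  by_contra hle
  push_neg at hle
  have hne : g p * g q ≠ 0 := mul_ne_zero (hg p hp) (hg q hq)
  have hlt : g p * g q < 0 := lt_of_le_of_ne hle hne
  rcases lt_trichotomy p q with h | h | h
  · obtain ⟨z, hz, hz0⟩ := ivt_zero h (hcont.mono (hIcc hp hq)) hlt
    exact hg z (hIcc hp hq (Ioo_subset_Icc_self hz)) hz0
  · rw [h] at hlt; nlinarith
  · obtain ⟨z, hz, hz0⟩ := ivt_zero h (hcont.mono (hIcc hq hp)) (by nlinarith)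
    exact hg z (hIcc hq hp (Ioo_subset_Icc_self hz)) hz0


/-- If `F₀, …, F_ℓ` are `ℓ+1` linearly independent analytic functions on an open
interval `(a,b)` and one of them never vanishes there, then some linear
combination `∑ dⱼ Fⱼ` has at least `ℓ` simple zeros in `(a,b)`. -/
theorem linear_combination_simple_zeros (ℓ : ℕ) (a b : ℝ) (hab : a < b)
    (F : Fin (ℓ + 1) → ℝ → ℝ)
    (hanal : ∀ j, AnalyticOnNhd ℝ (F j) (Set.Ioo a b))
    (hli : ∀ c : Fin (ℓ + 1) → ℝ,
      (∀ x ∈ Set.Ioo a b, ∑ j, c j * F j x = 0) → ∀ j, c j = 0)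
    (k : Fin (ℓ + 1)) (hk : ∀ x ∈ Set.Ioo a b, F k x ≠ 0) :
    ∃ d : Fin (ℓ + 1) → ℝ, ∃ S : Finset ℝ, ℓ ≤ S.card ∧
      ∀ x ∈ S, x ∈ Set.Ioo a b ∧ (∑ j, d j * F j x) = 0 ∧
        deriv (fun t => ∑ j, d j * F j t) x ≠ 0 := by
  classical
  rcases Nat.eq_zero_or_pos ℓ with hℓ0 | hℓpos
  · subst hℓ0; exact ⟨fun _ => 0, ∅, by simp⟩
  set s := Set.Ioo a b with hs
  have hIccs : ∀ {u v : ℝ}, u ∈ s → v ∈ s → Icc u v ⊆ s := by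
    intro u v hu hv t ht
    exact ⟨lt_of_lt_of_le hu.1 ht.1, lt_of_le_of_lt ht.2 hv.2⟩
  obtain ⟨x, hxs, hxmono, hxli⟩ := exists_eval_points (ℓ+1) s F hli
  obtain ⟨d, hd⟩ := exists_solve (ℓ+1) (fun i => fun j => F j (x i)) hxli
    (fun i => (-1)^(i:ℕ))
  -- the combination G and the quotient H
  set G : ℝ → ℝ := fun t => ∑ j, d j * F j t with hG
  have hGanal : AnalyticOnNhd ℝ G s :=
    Finset.analyticOnNhd_fun_sum _ (fun j _ => (analyticOnNhd_const).mul (hanal j))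
  set H : ℝ → ℝ := fun t => G t / F k t with hH
  have hHanal : AnalyticOnNhd ℝ H s := hGanal.div (hanal k) hk
  have hGH : ∀ t ∈ s, G t = H t * F k t := fun t ht => (div_mul_cancel₀ _ (hk t ht)).symm
  set H' := deriv H with hH'
  have hH'anal : AnalyticOnNhd ℝ H' s := hHanal.deriv_of_isOpen isOpen_Ioo
  set K := Icc (x 0) (x (Fin.last ℓ)) with hK
  have hKs : K ⊆ s := hIccs (hxs 0) (hxs (Fin.last ℓ))
  -- the second point
  set i1 : Fin (ℓ+1) := ⟨1, by omega⟩ with hi1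
  have hx01 : x 0 < x i1 := hxmono (by simp [Fin.lt_def, hi1])
  have hGx0 : G (x 0) = 1 := by rw [hG]; simpa using hd 0
  have hGx1 : G (x i1) = -1 := by rw [hG]; simpa [hi1] using hd i1
  have hHx0 : H (x 0) ≠ H (x i1) := by
    have h0 : H (x 0) = 1 / F k (x 0) := by rw [hH]; simp only; rw [hGx0]
    have h1 : H (x i1) = -1 / F k (x i1) := by rw [hH]; simp only; rw [hGx1]
    intro heq
    rw [h0, h1] at heq
    have hk0 := hk (x 0) (hxs 0)
    have hk1 := hk (x i1) (hxs i1)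
    have hsgn := same_sign ((hanal k).continuousOn) hk (hxs 0) (hxs i1)
    have : F k (x i1) = - F k (x 0) := by field_simp at heq; linarith
    rw [this] at hsgn
    nlinarith [sq_nonneg (F k (x 0))]
  -- finitely many critical points of H in K
  set Z := {t | t ∈ K ∧ H' t = 0} with hZ
  have hZfin : Z.Finite := by
    by_contra hinf
    have hinf' : Z.Infinite := hinf
    obtain ⟨z, hzK, hzacc⟩ := hinf'.exists_accPt_of_subset_isCompact isCompact_Icc
      (fun t ht => ht.1)
    have hfreq : ∃ᶠ t in nhdsWithin z {z}ᶜ, H' t = 0 := by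
      rw [accPt_iff_frequently] at hzacc
      rw [frequently_nhdsWithin_iff]
      exact hzacc.mono (fun t ht => ⟨ht.2.2, ht.1⟩)
    have hEq : EqOn H' 0 s := hH'anal.eqOn_zero_of_preconnected_of_frequently_eq_zero
      isPreconnected_Ioo (hKs hzK) hfreq
    -- MVT between x 0 and x i1 contradicts H' ≡ 0
    have hsub : Icc (x 0) (x i1) ⊆ s := hIccs (hxs 0) (hxs i1)
    have hcont : ContinuousOn H (Icc (x 0) (x i1)) := hHanal.continuousOn.mono hsub
    have hdiff : ∀ t ∈ Ioo (x 0) (x i1), HasDerivAt H (H' t) t := fun t ht =>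
      (hHanal t (hsub (Ioo_subset_Icc_self ht))).differentiableAt.hasDerivAt
    obtain ⟨t, ht, hslope⟩ := exists_hasDerivAt_eq_slope H H' hx01 hcont hdiff
    have h0 : H' t = 0 := hEq (hsub (Ioo_subset_Icc_self ht))
    rw [h0] at hslope
    have : H (x i1) - H (x 0) = 0 := by
      rcases div_eq_zero_iff.mp hslope.symm with h | h
      · exact h
      · exact absurd h (sub_ne_zero.2 hx01.ne')
    exact hHx0 (by linarith)
  -- choose the level c
  set M := 1 + ∑ i, |F k (x i)| with hM
  have hMpos : (0:ℝ) < M := by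
    rw [hM]
    have : (0:ℝ) ≤ ∑ i, |F k (x i)| := Finset.sum_nonneg (fun i _ => abs_nonneg _)
    linarith
  have hMi : ∀ i, |F k (x i)| ≤ M := by
    intro i
    rw [hM]
    have := Finset.single_le_sum (f := fun i => |F k (x i)|)
      (fun i _ => abs_nonneg _) (Finset.mem_univ i)
    linarith
  have hinf2 : (Set.Ioo (0:ℝ) (1/M) \ (H '' Z)).Infinite :=
    (Set.Ioo_infinite (by positivity)).diff (hZfin.image H)
  obtain ⟨c, ⟨hc0, hcM⟩, hcZ⟩ := hinf2.nonempty
  have hcbound : ∀ i, |c * F k (x i)| < 1 := by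
    intro i
    rw [abs_mul, abs_of_pos hc0]
    calc c * |F k (x i)| ≤ c * M := mul_le_mul_of_nonneg_left (hMi i) hc0.le
      _ < (1/M) * M := mul_lt_mul_of_pos_right hcM hMpos
      _ = 1 := by field_simp
  -- the perturbed combination
  set Gc : ℝ → ℝ := fun t => G t - c * F k t with hGc
  have hGcanal : AnalyticOnNhd ℝ Gc s := hGanal.sub ((analyticOnNhd_const).mul (hanal k))
  have hA : ∀ i : Fin (ℓ+1), 0 < (-1:ℝ)^(i:ℕ) * Gc (x i) := by
    intro i
    have hv : Gc (x i) = (-1:ℝ)^(i:ℕ) - c * F k (x i) := by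
      rw [hGc]; simp only; rw [hG]; simp only; rw [hd i]
    set e := (-1:ℝ)^(i:ℕ) with he'
    have he : e * e = 1 := by
      rw [he', ← pow_add, Even.neg_one_pow ⟨i, rfl⟩]
    have hb : e * (c * F k (x i)) < 1 := by
      refine lt_of_le_of_lt (le_abs_self _) ?_
      rw [abs_mul, he', abs_pow, abs_neg, abs_one, one_pow, one_mul]
      exact hcbound i
    have expand : e * Gc (x i) = e * e - e * (c * F k (x i)) := by rw [hv]; ring
    rw [expand, he]; linarith
  -- a zero in each consecutive interval
  have hivt : ∀ i : Fin ℓ, ∃ z ∈ Ioo (x i.castSucc) (x i.succ), Gc z = 0 := by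
    intro i
    have hlt : x i.castSucc < x i.succ := hxmono Fin.castSucc_lt_succ
    have hcont : ContinuousOn Gc (Icc (x i.castSucc) (x i.succ)) :=
      hGcanal.continuousOn.mono (hIccs (hxs _) (hxs _))
    have h1 := hA i.castSucc
    have h2 := hA i.succ
    rw [Fin.coe_castSucc] at h1
    rw [Fin.val_succ, pow_succ] at h2
    have hprod : Gc (x i.castSucc) * Gc (x i.succ) < 0 := by
      set e := (-1:ℝ)^(i:ℕ)
      have he : e * e = 1 := by rw [← pow_add, Even.neg_one_pow ⟨i, rfl⟩]
      nlinarith [mul_pos h1 h2]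
    exact ivt_zero hlt hcont hprod
  choose z hzmem hz0 using hivt
  -- z is strictly monotone
  have hzmono : StrictMono z := by
    intro i j hij
    have h1 : z i < x i.succ := (hzmem i).2
    have h2 : x j.castSucc < z j := (hzmem j).1
    have h3 : x i.succ ≤ x j.castSucc := hxmono.monotone (by
      have hij' : (i:ℕ) < (j:ℕ) := hij
      rw [Fin.le_def, Fin.val_succ, Fin.coe_castSucc]
      omega)
    linarith
  have hzs : ∀ i, z i ∈ s := fun i =>
    hIccs (hxs i.castSucc) (hxs i.succ) (Ioo_subset_Icc_self (hzmem i))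
  have hzK : ∀ i, z i ∈ K := by
    intro i
    constructor
    · exact le_trans (hxmono.monotone (Fin.zero_le _)) (hzmem i).1.le
    · exact le_trans (hzmem i).2.le (hxmono.monotone (Fin.le_last _))
  -- each zero is simple
  have hHz : ∀ i, H (z i) = c := by
    intro i
    have hGz : G (z i) = c * F k (z i) := by
      have := hz0 i; rw [hGc] at this; simp only at this; linarith
    rw [hH]; simp only; rw [hGz]
    exact mul_div_cancel_right₀ c (hk _ (hzs i))
  have hH'z : ∀ i, H' (z i) ≠ 0 := by
    intro i h0
    exact hcZ ⟨z i, ⟨hzK i, h0⟩, hHz i⟩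
  have hderiv : ∀ i, deriv Gc (z i) ≠ 0 := by
    intro i
    have heq : Gc =ᶠ[nhds (z i)] fun t => (H t - c) * F k t := by
      filter_upwards [isOpen_Ioo.mem_nhds (hzs i)] with t ht
      rw [hGc]; simp only; rw [hGH t ht]; ring
    have hHd : HasDerivAt H (H' (z i)) (z i) :=
      (hHanal _ (hzs i)).differentiableAt.hasDerivAt
    have hFd : HasDerivAt (F k) (deriv (F k) (z i)) (z i) :=
      (hanal k _ (hzs i)).differentiableAt.hasDerivAt
    have hPd : HasDerivAt (fun t => (H t - c) * F k t)
        (H' (z i) * F k (z i) + (H (z i) - c) * deriv (F k) (z i)) (z i) :=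
      (hHd.sub_const c).mul hFd
    rw [heq.deriv_eq, hPd.deriv, hHz i, sub_self, zero_mul, add_zero]
    exact mul_ne_zero (hH'z i) (hk _ (hzs i))
  -- conclusion
  set d' : Fin (ℓ+1) → ℝ := fun j => d j - c * (if j = k then 1 else 0) with hd'
  have hsum : (fun t => ∑ j, d' j * F j t) = Gc := by
    funext t
    rw [hGc, hG]
    simp only [hd', sub_mul, Finset.sum_sub_distrib]
    congr 1
    have hstep : ∀ j ∈ Finset.univ, (c * if j = k then 1 else 0) * F j t
        = if j = k then c * F j t else 0 := fun j _ => by split <;> simp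
    rw [Finset.sum_congr rfl hstep, Finset.sum_ite_eq' Finset.univ k (fun j => c * F j t)]
    simp
  refine ⟨d', Finset.image z Finset.univ, ?_, ?_⟩
  · rw [Finset.card_image_of_injective _ hzmono.injective, Finset.card_univ, Fintype.card_fin]
  · intro t ht
    rw [Finset.mem_image] at ht
    obtain ⟨i, _, rfl⟩ := ht
    refine ⟨hzs i, ?_, ?_⟩
    · have := hz0 i
      rw [show (∑ j, d' j * F j (z i)) = Gc (z i) from congr_fun hsum (z i)]
      exact this
    · rw [hsum]
      exact hderiv i
end
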